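/- For every x > 0, ∫₁^x e^t/t dt = log x + e^x ∑_{n≥0} (-1)^{n+1} H_n xⁿ/n! + e ∑_{n≥0} (-1)ⁿ H_n/n!. -/

import Mathlib

open Finset

private lemma harm_nonneg' (n : ℕ) : (0:ℝ) ≤ (harmonic n : ℝ) := by
  rcases Nat.eq_zero_or_pos n with h | h
  · simp [h, harmonic_zero]
  · exact_mod_cast (harmonic_pos h.ne').le

private lemma harm_le' (n : ℕ) : (harmonic n : ℝ) ≤ n := by
  rw [harmonic]
  push_cast
  calc ∑ i ∈ Finset.range n, ((i:ℝ)+1)⁻¹ ≤ ∑ i ∈ Finset.range n, 1 := by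
        apply Finset.sum_le_sum
        intro i _
        rw [inv_le_one_iff₀]; right; linarith
    _ = n := by simp

private lemma summable_g' (y : ℝ) :
    Summable (fun n : ℕ => ‖(-1:ℝ)^(n+1) * (harmonic n : ℝ) * y^n / (Nat.factorial n)‖) := by
  apply Summable.of_nonneg_of_le (fun n => norm_nonneg _) (fun n => ?_)
    (Real.summable_pow_div_factorial (2*|y|))
  have h1 : (harmonic n : ℝ) ≤ 2^n :=
    le_trans (harm_le' n) (by exact_mod_cast Nat.le_of_lt (Nat.lt_two_pow_self (n := n)))
  have h2 : ‖(-1:ℝ)^(n+1) * (harmonic n : ℝ) * y^n / (Nat.factorial n)‖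
      = (harmonic n : ℝ) * |y|^n / (Nat.factorial n) := by
    rw [Real.norm_eq_abs, abs_div, abs_mul, abs_mul, abs_pow, abs_neg, abs_one, one_pow,
      one_mul, abs_of_nonneg (harm_nonneg' n), abs_pow, Nat.abs_cast]
  rw [h2, mul_pow]
  gcongr

private lemma alt_real' (n : ℕ) (h : n ≠ 0) :
    ∑ m ∈ range (n+1), (-1:ℝ)^m * (n.choose m : ℝ) = 0 := by
  have h1 := Int.alternating_sum_range_choose_of_ne h
  have h2 : ((∑ m ∈ range (n + 1), ((-1) ^ m * n.choose m : ℤ) : ℤ) : ℝ) = 0 := by rw [h1]; simp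
  push_cast at h2
  convert h2 using 2

private lemma alt_inv' (k : ℕ) :
    ∑ m ∈ range (k+1), (-1:ℝ)^m * (k.choose m : ℝ) / (m+1) = 1/(k+1) := by
  have key : ∀ m : ℕ, (-1:ℝ)^m * (k.choose m : ℝ) / (m+1)
      = (-1:ℝ)^m * ((k+1).choose (m+1) : ℝ) / (k+1) := by
    intro m
    have h' : ((k:ℝ)+1) * (k.choose m : ℝ) = ((k+1).choose (m+1) : ℝ) * ((m:ℝ)+1) := by
      exact_mod_cast congrArg (Nat.cast : ℕ → ℝ) (Nat.add_one_mul_choose_eq k m)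
    rw [div_eq_div_iff (by positivity) (by positivity)]
    rw [mul_assoc, mul_assoc]
    congr 1
    linarith [h']
  rw [Finset.sum_congr rfl (fun m _ => key m), ← Finset.sum_div]
  have h2 : ∑ m ∈ range (k+2), (-1:ℝ)^m * ((k+1).choose m : ℝ) = 0 := alt_real' (k+1) (by omega)
  rw [Finset.sum_range_succ'] at h2
  simp only [Nat.choose_zero_right, pow_zero, Nat.cast_one, one_mul, mul_one] at h2
  have h3 : ∑ m ∈ range (k+1), (-1:ℝ)^m * ((k+1).choose (m+1) : ℝ) = 1 := by
    have : ∑ m ∈ range (k+1), (-1:ℝ)^m * ((k+1).choose (m+1) : ℝ)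
        = -∑ m ∈ range (k+1), (-1:ℝ)^(m+1) * ((k+1).choose (m+1) : ℝ) := by
      rw [← Finset.sum_neg_distrib]
      exact Finset.sum_congr rfl (fun m _ => by ring)
    rw [this]; linarith
  rw [h3]

private lemma harm_binom' (k : ℕ) :
    ∑ j ∈ range (k+2), (-1:ℝ)^j * ((k+1).choose j : ℝ) * (harmonic j : ℝ) = -1/(k+1) := by
  set f : ℕ → ℝ := fun j => (-1:ℝ)^j * (k.choose j : ℝ) * (harmonic j : ℝ) with hf
  set A : ℝ := ∑ j ∈ range (k+1), f j with hA
  have hB : (∑ m ∈ range (k+1), (-1:ℝ)^(m+1) * (k.choose (m+1):ℝ) * (harmonic (m+1):ℝ)) = A := by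
    have h1 := Finset.sum_range_succ' f (k+1)
    have h2 := Finset.sum_range_succ f (k+1)
    simp only [hf, harmonic_zero, Nat.choose_succ_self, Rat.cast_zero, Nat.cast_zero,
      mul_zero, zero_mul, add_zero, pow_zero, one_mul] at h1 h2
    rw [← hA] at h2
    rw [h2] at h1
    exact h1.symm
  have hsucc : ∀ m : ℕ, (harmonic (m+1) : ℝ) = (harmonic m : ℝ) + 1/((m:ℝ)+1) := by
    intro m
    rw [harmonic_succ]
    push_cast
    ring
  rw [Finset.sum_range_succ']
  simp only [harmonic_zero, Rat.cast_zero, mul_zero, add_zero]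
  have step : ∀ m ∈ range (k+1), (-1:ℝ)^(m+1) * (((k+1).choose (m+1) : ℕ) : ℝ) * (harmonic (m+1) : ℝ)
      = (-(f m) - (-1:ℝ)^m * (k.choose m : ℝ)/((m:ℝ)+1))
        + (-1:ℝ)^(m+1) * (k.choose (m+1) : ℝ) * (harmonic (m+1) : ℝ) := by
    intro m _
    rw [Nat.choose_succ_succ, hsucc m]
    push_cast
    simp only [hf]
    ring
  rw [Finset.sum_congr rfl step, Finset.sum_add_distrib, hB, Finset.sum_sub_distrib]
  rw [show (∑ m ∈ range (k+1), -(f m)) = -A by rw [← Finset.sum_neg_distrib]]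
  have := alt_inv' k
  rw [show (∑ m ∈ range (k+1), (-1:ℝ)^m * (k.choose m : ℝ)/((m:ℝ)+1)) = 1/((k:ℝ)+1) from this]
  ring

private noncomputable def cfun (y : ℝ) : ℕ → ℝ := fun n =>
  match n with
  | 0 => 0
  | (m+1) => y^(m+1) / (((m:ℝ)+1) * ((Nat.factorial (m+1) : ℕ) : ℝ))

private lemma exp_tsum' (y : ℝ) : Real.exp y = ∑' n : ℕ, y^n / (Nat.factorial n : ℝ) := by
  rw [Real.exp_eq_exp_ℝ, NormedSpace.exp_eq_tsum_div]

private lemma summable_exp_norm' (y : ℝ) :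
    Summable (fun n : ℕ => ‖y^n / (Nat.factorial n : ℝ)‖) := by
  have := Real.summable_pow_div_factorial |y|
  apply this.congr
  intro n
  rw [Real.norm_eq_abs, abs_div, abs_pow, Nat.abs_cast]

private lemma inner_eq' (y : ℝ) (n : ℕ) :
    ∑ k ∈ range (n+1), (y^k / (Nat.factorial k : ℝ)) *
        ((-1:ℝ)^(n-k+1) * (harmonic (n-k) : ℝ) * y^(n-k) / (Nat.factorial (n-k) : ℝ))
      = cfun y n := by
  rw [← Finset.sum_range_reflect]
  simp only [Nat.add_sub_cancel]
  have step : ∀ j ∈ range (n+1),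
      (y^(n-j) / (Nat.factorial (n-j) : ℝ)) *
        ((-1:ℝ)^(n-(n-j)+1) * (harmonic (n-(n-j)) : ℝ) * y^(n-(n-j)) / (Nat.factorial (n-(n-j)) : ℝ))
      = (y^n / (Nat.factorial n : ℝ)) * (-(1:ℝ)) * ((-1:ℝ)^j * (n.choose j : ℝ) * (harmonic j : ℝ)) := by
    intro j hj
    rw [mem_range] at hj
    have hjn : j ≤ n := by omega
    rw [Nat.sub_sub_self hjn]
    have hfac : (Nat.factorial n : ℝ)
        = (n.choose j : ℝ) * (Nat.factorial j : ℝ) * (Nat.factorial (n-j) : ℝ) := by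
      exact_mod_cast (Nat.choose_mul_factorial_mul_factorial hjn).symm
    have hpow : y^(n-j) * y^j = y^n := by
      rw [← pow_add]; congr 1; omega
    have hj0 : (Nat.factorial j : ℝ) ≠ 0 := by positivity
    have hnj0 : (Nat.factorial (n-j) : ℝ) ≠ 0 := by positivity
    have hc0 : (0:ℝ) < (n.choose j : ℝ) := by
      exact_mod_cast Nat.choose_pos hjn
    field_simp [hfac]
    rw [← hpow, hfac]
    ring
  rw [Finset.sum_congr rfl step, ← Finset.mul_sum]
  match n with
  | 0 => simp [cfun, harmonic_zero]
  | (m+1) =>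
    rw [show m+1+1 = m+2 from rfl, harm_binom' m]
    simp only [cfun]
    have h1 : (Nat.factorial (m+1) : ℝ) = ((m:ℝ)+1) * (Nat.factorial m : ℝ) := by
      rw [Nat.factorial_succ]; push_cast; ring
    field_simp
    try exact Or.inl trivial

private noncomputable def Ffun : ℝ → ℝ :=
  fun y => ∑' k : ℕ, y^(k+1) / (((k:ℝ)+1) * ((Nat.factorial (k+1) : ℕ) : ℝ))

private lemma key_cauchy (y : ℝ) :
    Real.exp y * (∑' n : ℕ, (-1:ℝ)^(n+1) * (harmonic n : ℝ) * y^n / (Nat.factorial n))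
      = Ffun y := by
  rw [exp_tsum' y,
    tsum_mul_tsum_eq_tsum_sum_range_of_summable_norm (summable_exp_norm' y) (summable_g' y)]
  rw [tsum_congr (inner_eq' y)]
  have hs : Summable (cfun y) :=
    ((summable_norm_sum_mul_range_of_summable_norm (summable_exp_norm' y)
      (summable_g' y)).of_norm).congr (inner_eq' y)
  rw [Summable.tsum_eq_zero_add hs]
  show (0:ℝ) + ∑' k : ℕ, cfun y (k+1) = Ffun y
  rw [zero_add, Ffun]
  exact tsum_congr (fun k => rfl)

private lemma hasDeriv_Ffun (y : ℝ) :
    HasDerivAt Ffun (∑' k : ℕ, y^k / ((Nat.factorial (k+1) : ℕ) : ℝ)) y := by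
  set R : ℝ := |y| + 1 with hR
  have hR0 : 0 < R := by positivity
  refine hasDerivAt_tsum_of_isPreconnected
    (Real.summable_pow_div_factorial R) (Metric.isOpen_ball (x := (0:ℝ)) (ε := R))
    ((convex_ball (0:ℝ) R).isPreconnected)
    (g := fun (k : ℕ) (z : ℝ) => z^(k+1) / (((k:ℝ)+1) * ((Nat.factorial (k+1) : ℕ) : ℝ)))
    (g' := fun (k : ℕ) (z : ℝ) => z^k / ((Nat.factorial (k+1) : ℕ) : ℝ))
    (y₀ := 0) ?_ ?_ ?_ ?_ ?_
  · intro k z _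
    have h1 : HasDerivAt (fun z : ℝ => z^(k+1)) (((k:ℝ)+1) * z^k) z := by
      have := hasDerivAt_pow (k+1) z
      simpa [Nat.add_sub_cancel] using this
    have h2 := h1.div_const (((k:ℝ)+1) * ((Nat.factorial (k+1) : ℕ) : ℝ))
    convert h2 using 1
    have : ((k:ℝ)+1) ≠ 0 := by positivity
    have : ((Nat.factorial (k+1) : ℕ) : ℝ) ≠ 0 := by positivity
    · rfl
    field_simp
  · intro k z hz
    rw [Metric.mem_ball, dist_zero_right, Real.norm_eq_abs] at hz
    rw [Real.norm_eq_abs, abs_div, abs_pow, Nat.abs_cast]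
    have h2 : ((Nat.factorial k : ℕ) : ℝ) ≤ ((Nat.factorial (k+1) : ℕ) : ℝ) := by
      exact_mod_cast Nat.factorial_le (Nat.le_succ k)
    have h3 : (0:ℝ) < (Nat.factorial k : ℝ) := by positivity
    calc |z|^k / ((Nat.factorial (k+1) : ℕ) : ℝ) ≤ R^k / ((Nat.factorial (k+1) : ℕ) : ℝ) := by
          gcongr
      _ ≤ R^k / ((Nat.factorial k : ℕ) : ℝ) :=
          div_le_div_of_nonneg_left (pow_nonneg hR0.le k) h3 h2
  · rw [Metric.mem_ball, dist_zero_right, Real.norm_eq_abs, abs_zero]; exact hR0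
  · have h0 : Summable (fun _ : ℕ => (0:ℝ)) := summable_zero
    apply h0.congr
    intro k
    simp
  · rw [Metric.mem_ball, dist_zero_right, Real.norm_eq_abs]
    linarith [abs_nonneg y]

private lemma summable_exp' (y : ℝ) : Summable (fun n : ℕ => y^n / (Nat.factorial n : ℝ)) :=
  (summable_exp_norm' y).of_norm

private lemma deriv_val' (y : ℝ) (hy : y ≠ 0) :
    (∑' k : ℕ, y^k / ((Nat.factorial (k+1) : ℕ) : ℝ)) = (Real.exp y - 1)/y := by
  have hexp := summable_exp' y
  have hsplit : Real.exp y = 1 + ∑' k : ℕ, y^(k+1) / ((Nat.factorial (k+1) : ℕ) : ℝ) := by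
    rw [exp_tsum' y, Summable.tsum_eq_zero_add hexp]
    simp
  have hmul : y * (∑' k : ℕ, y^k / ((Nat.factorial (k+1) : ℕ) : ℝ))
      = ∑' k : ℕ, y^(k+1) / ((Nat.factorial (k+1) : ℕ) : ℝ) := by
    rw [← tsum_mul_left]
    apply tsum_congr
    intro k
    rw [pow_succ]
    ring
  rw [eq_div_iff hy]
  rw [mul_comm] at hmul
  rw [hmul]
  linarith [hsplit]

private lemma hasDeriv_G' (t : ℝ) (ht : 0 < t) :
    HasDerivAt (fun s => Real.log s + Ffun s) (Real.exp t / t) t := by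
  have h1 := Real.hasDerivAt_log (ne_of_gt ht)
  have h2 := hasDeriv_Ffun t
  rw [deriv_val' t (ne_of_gt ht)] at h2
  have h3 := h1.add h2
  convert h3 using 1
  · rfl
  · rfl
  · rfl
  field_simp
  ring

theorem stmt_18 (x : ℝ) (hx : 0 < x) :
    ∫ t in (1:ℝ)..x, Real.exp t / t
      = Real.log x
        + Real.exp x * ∑' n : ℕ, (-1) ^ (n + 1) * (harmonic n : ℝ) * x ^ n / Nat.factorial n
        + Real.exp 1 * ∑' n : ℕ, (-1) ^ n * (harmonic n : ℝ) / Nat.factorial n := by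
  have hpos : ∀ t ∈ Set.uIcc (1:ℝ) x, 0 < t := by
    intro t ht
    rcases Set.mem_uIcc.mp ht with ⟨h1, _⟩ | ⟨h1, _⟩ <;> linarith
  have hder : ∀ t ∈ Set.uIcc (1:ℝ) x,
      HasDerivAt (fun s => Real.log s + Ffun s) (Real.exp t / t) t :=
    fun t ht => hasDeriv_G' t (hpos t ht)
  have hint : IntervalIntegrable (fun t => Real.exp t / t) MeasureTheory.volume 1 x := by
    apply ContinuousOn.intervalIntegrable
    exact (Real.continuous_exp.continuousOn).div continuousOn_id
      (fun t ht => ne_of_gt (hpos t ht))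
  rw [intervalIntegral.integral_eq_sub_of_hasDerivAt hder hint]
  have hFx := key_cauchy x
  have hF1 := key_cauchy 1
  have hneg : (∑' n : ℕ, (-1:ℝ) ^ n * (harmonic n : ℝ) / Nat.factorial n)
      = -∑' n : ℕ, (-1:ℝ) ^ (n+1) * (harmonic n : ℝ) * (1:ℝ)^n / Nat.factorial n := by
    rw [← tsum_neg]
    apply tsum_congr
    intro n
    ring
  rw [hneg, Real.log_one, ← hFx, ← hF1]
  ring
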